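/- Let (α, ≤) be a linear order and let f and f' be order-automorphisms of α, each having a single +-orbital. Then: (i) the composition f' ∘ f has a single +-orbital; and (ii) for every order-automorphism h of α, the conjugate h ∘ f ∘ h⁻¹ has a single +-orbital. Consequently, any product of conjugates of order-automorphisms each having a single +-orbital has a single +-orbital; the analogous statements hold for single −-orbitals. -/

import Mathlib

/-- The group of order-automorphisms of a linear order `α`, as a subgroup of
`Equiv.Perm α`. -/
def OrdAut (α : Type*) [LinearOrder α] : Subgroup (Equiv.Perm α) where
  carrier := {g | ∀ a b : α, a ≤ b ↔ g a ≤ g b}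
  one_mem' := fun _ _ => Iff.rfl
  mul_mem' := by
    intro g h hg hh a b
    exact (hh a b).trans (hg (h a) (h b))
  inv_mem' := by
    intro g hg a b
    simpa using (hg (g⁻¹ a) (g⁻¹ b)).symm

/-- `f` has a single `+`-orbital: there is `a` with `a < f a` whose orbit
`{f^k a : k ∈ ℤ}` is unbounded above and below in `α`. -/
def SinglePlusOrbital {α : Type*} [LinearOrder α] (f : Equiv.Perm α) : Prop :=
  ∃ a : α, a < f a ∧ (∀ x : α, ∃ k : ℤ, x < (f ^ k) a) ∧ (∀ x : α, ∃ k : ℤ, (f ^ k) a < x)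

/-- `f` has a single `−`-orbital: there is `a` with `f a < a` whose orbit
`{f^k a : k ∈ ℤ}` is unbounded above and below in `α`. -/
def SingleMinusOrbital {α : Type*} [LinearOrder α] (f : Equiv.Perm α) : Prop :=
  ∃ a : α, f a < a ∧ (∀ x : α, ∃ k : ℤ, x < (f ^ k) a) ∧ (∀ x : α, ∃ k : ℤ, (f ^ k) a < x)

section Aux
variable {α : Type*} [LinearOrder α]

lemma OrdAut.le_iff (f : OrdAut α) (a b : α) :
    a ≤ b ↔ (f : Equiv.Perm α) a ≤ (f : Equiv.Perm α) b := f.2 a b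

lemma OrdAut.sm (f : OrdAut α) : StrictMono ⇑(f : Equiv.Perm α) :=
  fun a b h => lt_of_not_ge fun hle => absurd ((f.2 b a).mpr hle) (not_le.mpr h)

lemma OrdAut.zpow_le_iff (f : OrdAut α) (k : ℤ) (a b : α) :
    a ≤ b ↔ ((f : Equiv.Perm α) ^ k) a ≤ ((f : Equiv.Perm α) ^ k) b := by
  have := (f ^ k).2 a b
  simpa [SubgroupClass.coe_zpow] using this

lemma OrdAut.zpow_sm (f : OrdAut α) (k : ℤ) : StrictMono ⇑((f : Equiv.Perm α) ^ k) := by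
  have := OrdAut.sm (f ^ k)
  simpa [SubgroupClass.coe_zpow] using this

lemma OrdAut.orbit_sm (f : OrdAut α) {a : α} (ha : a < (f : Equiv.Perm α) a) :
    StrictMono (fun k : ℤ => ((f : Equiv.Perm α) ^ k) a) := by
  apply strictMono_int_of_lt_succ
  intro k
  have h1 : (f : Equiv.Perm α) ^ (k + 1) = (f : Equiv.Perm α) ^ k * (f : Equiv.Perm α) :=
    zpow_add_one _ k
  simp only [h1, Equiv.Perm.mul_apply]
  exact OrdAut.zpow_sm f k ha

/-- An order automorphism with a single `+`-orbital moves every point up. -/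
lemma OrdAut.plus_ptwise (f : OrdAut α) (hf : SinglePlusOrbital (f : Equiv.Perm α)) :
    ∀ b : α, b < (f : Equiv.Perm α) b := by
  set F := (f : Equiv.Perm α) with hF
  obtain ⟨a, ha, hub, hlb⟩ := hf
  intro b
  by_contra h
  push_neg at h
  obtain ⟨k₀, hk₀⟩ := hub b
  obtain ⟨m₀, hm₀⟩ := hlb b
  have key : ∀ n : ℕ, (F ^ (m₀ + n)) a ≤ b := by
    intro n
    induction n with
    | zero => simpa using hm₀.le
    | succ n ih =>
      have h1 : F ^ (m₀ + (n + 1 : ℕ)) = F * F ^ (m₀ + n) := by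
        rw [← zpow_one_add]; congr 1; push_cast; ring
      rw [h1, Equiv.Perm.mul_apply]
      exact le_trans (OrdAut.sm f |>.monotone ih) h
  have hn : k₀ ≤ m₀ + ((k₀ - m₀).toNat : ℤ) := by
    have := Int.self_le_toNat (k₀ - m₀)
    omega
  have := (OrdAut.orbit_sm f ha).monotone hn
  exact absurd (le_trans this (key _)) (not_le.mpr hk₀)

/-- Composition of two single-`+`-orbital automorphisms. -/
lemma OrdAut.plus_comp (f f' : OrdAut α) (hf : SinglePlusOrbital (f : Equiv.Perm α))
    (hf' : SinglePlusOrbital (f' : Equiv.Perm α)) :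
    SinglePlusOrbital ((f' * f : OrdAut α) : Equiv.Perm α) := by
  set F := (f : Equiv.Perm α) with hF
  set F' := (f' : Equiv.Perm α) with hF'
  have hcoe : ((f' * f : OrdAut α) : Equiv.Perm α) = F' * F := rfl
  set G := F' * F with hG
  have hpF := OrdAut.plus_ptwise f hf
  have hpF' := OrdAut.plus_ptwise f' hf'
  have hFG : ∀ x, F x ≤ G x := fun x => (hpF' (F x)).le
  have hGFinv : ∀ x, G⁻¹ x ≤ F⁻¹ x := by
    intro x
    refine (OrdAut.le_iff f _ _).mpr ?_
    calc F (G⁻¹ x) ≤ G (G⁻¹ x) := hFG _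
    _ = x := by simp
    _ = F (F⁻¹ x) := by simp
  obtain ⟨a, ha, hub, hlb⟩ := hf
  rw [hcoe]
  have hmonoG : Monotone ⇑G := (OrdAut.sm (f' * f : OrdAut α)).monotone
  have hmonoGinv : Monotone ⇑G⁻¹ := by
    have := (OrdAut.sm ((f' * f : OrdAut α)⁻¹)).monotone
    exact this
  have upper : ∀ n : ℕ, (F ^ n) a ≤ (G ^ n) a := by
    intro n
    induction n with
    | zero => simp
    | succ n ih =>
      rw [pow_succ', pow_succ', Equiv.Perm.mul_apply, Equiv.Perm.mul_apply]
      exact le_trans ((OrdAut.sm f).monotone ih) (hFG _)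
  have lower : ∀ n : ℕ, (G⁻¹ ^ n) a ≤ (F⁻¹ ^ n) a := by
    intro n
    induction n with
    | zero => simp
    | succ n ih =>
      rw [pow_succ', pow_succ', Equiv.Perm.mul_apply, Equiv.Perm.mul_apply]
      exact le_trans (hmonoGinv ih) (hGFinv _)
  refine ⟨a, lt_trans ha (hpF' (F a)), ?_, ?_⟩
  · intro x
    obtain ⟨k, hk⟩ := hub x
    refine ⟨(k.toNat : ℤ), ?_⟩
    have h1 : (F ^ k) a ≤ (F ^ (k.toNat : ℤ)) a :=
      (OrdAut.orbit_sm f ha).monotone (Int.self_le_toNat k)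
    have h2 : (F ^ (k.toNat : ℤ)) a ≤ (G ^ (k.toNat : ℤ)) a := by
      rw [zpow_natCast, zpow_natCast]; exact upper k.toNat
    exact lt_of_lt_of_le hk (le_trans h1 h2)
  · intro x
    obtain ⟨k, hk⟩ := hlb x
    refine ⟨(-((-k).toNat : ℤ)), ?_⟩
    have h1 : (F ^ (-((-k).toNat : ℤ))) a ≤ (F ^ k) a := by
      refine (OrdAut.orbit_sm f ha).monotone ?_
      have := Int.self_le_toNat (-k); omega
    have h2 : (G ^ (-((-k).toNat : ℤ))) a ≤ (F ^ (-((-k).toNat : ℤ))) a := by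
      rw [zpow_neg, zpow_natCast, zpow_neg, zpow_natCast, ← inv_pow, ← inv_pow]
      exact lower _
    exact lt_of_le_of_lt (le_trans h2 h1) hk

/-- Conjugation preserves single `+`-orbital. -/
lemma OrdAut.plus_conj (f h : OrdAut α) (hf : SinglePlusOrbital (f : Equiv.Perm α)) :
    SinglePlusOrbital ((h * f * h⁻¹ : OrdAut α) : Equiv.Perm α) := by
  set F := (f : Equiv.Perm α) with hF
  set H := (h : Equiv.Perm α) with hH
  have hcoe : ((h * f * h⁻¹ : OrdAut α) : Equiv.Perm α) = H * F * H⁻¹ := rfl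
  obtain ⟨a, ha, hub, hlb⟩ := hf
  rw [hcoe]
  have hzpow : ∀ k : ℤ, ((H * F * H⁻¹) ^ k) (H a) = H ((F ^ k) a) := by
    intro k
    rw [conj_zpow]
    simp [Equiv.Perm.mul_apply]
  refine ⟨H a, ?_, ?_, ?_⟩
  · have := hzpow 1
    simp only [zpow_one] at this
    rw [this]
    exact OrdAut.sm h ha
  · intro x
    obtain ⟨k, hk⟩ := hub (H⁻¹ x)
    refine ⟨k, ?_⟩
    rw [hzpow]
    have := OrdAut.sm h hk
    simpa [hH] using this
  · intro x
    obtain ⟨k, hk⟩ := hlb (H⁻¹ x)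
    refine ⟨k, ?_⟩
    rw [hzpow]
    have := OrdAut.sm h hk
    simpa [hH] using this

/-- Products of conjugates, plus case. -/
lemma OrdAut.plus_list (l : List (OrdAut α)) (hne : l ≠ [])
    (hl : ∀ x ∈ l, ∃ f h : OrdAut α, SinglePlusOrbital (f : Equiv.Perm α) ∧ x = h * f * h⁻¹) :
    SinglePlusOrbital ((l.prod : OrdAut α) : Equiv.Perm α) := by
  induction l with
  | nil => exact absurd rfl hne
  | cons x l ih =>
    obtain ⟨f, h, hf, hx⟩ := hl x List.mem_cons_self
    have hxp : SinglePlusOrbital ((x : OrdAut α) : Equiv.Perm α) := by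
      rw [hx]; exact OrdAut.plus_conj f h hf
    rcases eq_or_ne l [] with rfl | hl'
    · simpa using hxp
    · have hlp := ih hl' (fun y hy => hl y (List.mem_cons_of_mem _ hy))
      rw [List.prod_cons]
      exact OrdAut.plus_comp l.prod x hlp hxp

/-- Duality between minus and plus via inverse. -/
lemma OrdAut.minus_iff_inv_plus (f : OrdAut α) :
    SingleMinusOrbital (f : Equiv.Perm α) ↔ SinglePlusOrbital ((f⁻¹ : OrdAut α) : Equiv.Perm α) := by
  have hcoe : ((f⁻¹ : OrdAut α) : Equiv.Perm α) = (f : Equiv.Perm α)⁻¹ := rfl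
  rw [hcoe]
  set F := (f : Equiv.Perm α) with hF
  constructor
  · rintro ⟨a, ha, hub, hlb⟩
    refine ⟨a, ?_, ?_, ?_⟩
    · have := OrdAut.sm f⁻¹ ha
      simpa [hF] using this
    · intro x
      obtain ⟨k, hk⟩ := hub x
      exact ⟨-k, by simpa [zpow_neg, inv_zpow] using hk⟩
    · intro x
      obtain ⟨k, hk⟩ := hlb x
      exact ⟨-k, by simpa [zpow_neg, inv_zpow] using hk⟩
  · rintro ⟨a, ha, hub, hlb⟩
    refine ⟨a, ?_, ?_, ?_⟩
    · have := OrdAut.sm f ha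
      simpa [hF] using this
    · intro x
      obtain ⟨k, hk⟩ := hub x
      exact ⟨-k, by simpa [zpow_neg, inv_zpow] using hk⟩
    · intro x
      obtain ⟨k, hk⟩ := hlb x
      exact ⟨-k, by simpa [zpow_neg, inv_zpow] using hk⟩

end Aux

theorem stmt18 (α : Type*) [LinearOrder α] :
    (∀ f f' : OrdAut α, SinglePlusOrbital (f : Equiv.Perm α) →
      SinglePlusOrbital (f' : Equiv.Perm α) →
      SinglePlusOrbital ((f' * f : OrdAut α) : Equiv.Perm α)) ∧
    (∀ f h : OrdAut α, SinglePlusOrbital (f : Equiv.Perm α) →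
      SinglePlusOrbital ((h * f * h⁻¹ : OrdAut α) : Equiv.Perm α)) ∧
    (∀ l : List (OrdAut α), l ≠ [] →
      (∀ x ∈ l, ∃ f h : OrdAut α, SinglePlusOrbital (f : Equiv.Perm α) ∧ x = h * f * h⁻¹) →
      SinglePlusOrbital ((l.prod : OrdAut α) : Equiv.Perm α)) ∧
    (∀ f f' : OrdAut α, SingleMinusOrbital (f : Equiv.Perm α) →
      SingleMinusOrbital (f' : Equiv.Perm α) →
      SingleMinusOrbital ((f' * f : OrdAut α) : Equiv.Perm α)) ∧
    (∀ f h : OrdAut α, SingleMinusOrbital (f : Equiv.Perm α) →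
      SingleMinusOrbital ((h * f * h⁻¹ : OrdAut α) : Equiv.Perm α)) ∧
    (∀ l : List (OrdAut α), l ≠ [] →
      (∀ x ∈ l, ∃ f h : OrdAut α, SingleMinusOrbital (f : Equiv.Perm α) ∧ x = h * f * h⁻¹) →
      SingleMinusOrbital ((l.prod : OrdAut α) : Equiv.Perm α)) := by
  refine ⟨OrdAut.plus_comp, OrdAut.plus_conj, OrdAut.plus_list, ?_, ?_, ?_⟩
  · intro f f' hf hf'
    rw [OrdAut.minus_iff_inv_plus] at hf hf' ⊢
    have : (f' * f)⁻¹ = f⁻¹ * f'⁻¹ := by group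
    rw [this]
    exact OrdAut.plus_comp f'⁻¹ f⁻¹ hf' hf
  · intro f h hf
    rw [OrdAut.minus_iff_inv_plus] at hf ⊢
    have : (h * f * h⁻¹)⁻¹ = h * f⁻¹ * h⁻¹ := by group
    rw [this]
    exact OrdAut.plus_conj f⁻¹ h hf
  · intro l hne hl
    rw [OrdAut.minus_iff_inv_plus]
    rw [List.prod_inv_reverse]
    apply OrdAut.plus_list
    · simp [hne]
    · intro x hx
      simp only [List.mem_reverse, List.mem_map] at hx
      obtain ⟨y, hy, rfl⟩ := hx
      obtain ⟨f, h, hf, rfl⟩ := hl y hy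
      refine ⟨f⁻¹, h, ?_, by group⟩
      rw [← OrdAut.minus_iff_inv_plus]
      exact hf
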